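/- Let M be a von Neumann algebra, let T : M → M be a (not necessarily linear or continuous) 2-local triple derivation, and let p be a central projection in M (a projection commuting with every element of M). Then T maps Mp into Mp; moreover, T(px) = pT(x) for every x ∈ M. -/
import Mathlib


noncomputable section

/-- The C*-triple product `{a,b,c} = (a b* c + c b* a)/2`. -/
def triple {A : Type*} [NonUnitalRing A] [StarRing A] [Module ℂ A] (a b c : A) : A :=
  (2 : ℂ)⁻¹ • (a * star b * c + c * star b * a)

/-- A (complex-linear) triple derivation on `A`:
`δ{a,b,c} = {δ(a),b,c} + {a,δ(b),c} + {a,b,δ(c)}`. -/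
def IsTripleDerivation {A : Type*} [NonUnitalRing A] [StarRing A] [Module ℂ A]
    (δ : A →ₗ[ℂ] A) : Prop :=
  ∀ a b c : A, δ (triple a b c) = triple (δ a) b c + triple a (δ b) c + triple a b (δ c)

/-- A 2-local triple derivation on `A`: a map (not assumed linear or continuous) that agrees
with some triple derivation at each pair of points. -/
def Is2LocalTripleDerivation {A : Type*} [NonUnitalRing A] [StarRing A] [Module ℂ A]
    (T : A → A) : Prop :=
  ∀ a b : A, ∃ S : A →ₗ[ℂ] A, IsTripleDerivation S ∧ T a = S a ∧ T b = S b

/-- Scalar multiplication by complex numbers preserves membership in a von Neumann algebra. -/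
instance VonNeumannAlgebra.instSMulMemClass {H : Type*} [NormedAddCommGroup H]
    [InnerProductSpace ℂ H] [CompleteSpace H] :
    SMulMemClass (VonNeumannAlgebra H) ℂ (H →L[ℂ] H) where
  smul_mem {s} c x hx := s.toStarSubalgebra.smul_mem hx c

private lemma halfSmulAddSelf {A : Type*} [AddCommGroup A] [Module ℂ A] (a : A) :
    (2 : ℂ)⁻¹ • (a + a) = a := by
  rw [← two_smul ℂ a, smul_smul]
  norm_num

/-- Key lemma: a triple derivation commutes with multiplication by a central projection. -/
lemma tripleDerivation_central {A : Type*} [NonUnitalRing A] [StarRing A] [Module ℂ A]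
    (S : A →ₗ[ℂ] A) (hS : IsTripleDerivation S) (p : A) (hsa : star p = p)
    (hid : p * p = p) (hc : ∀ x : A, p * x = x * p) (x : A) :
    S (p * x) = p * S x := by
  have hppx : ∀ y : A, triple p p y = p * y := by
    intro y
    rw [triple, hsa, hid, mul_assoc y p p, hid, ← hc y, halfSmulAddSelf]
  have hpyp : ∀ y : A, triple p y p = p * star y := by
    intro y
    rw [triple, ← hc (p * star y), ← mul_assoc, hid, halfSmulAddSelf]
  have hypp : ∀ y : A, triple y p p = p * y := by
    intro y
    rw [triple, hsa, mul_assoc y p p, hid, ← hc y, halfSmulAddSelf]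
  -- the fundamental identity at p
  have e1 : S p = p * S p + p * star (S p) + p * S p := by
    have h := hS p p p
    rw [hppx, hid, hypp, hpyp, hppx] at h
    exact h
  have e2 : p * star (S p) + p * S p = 0 := by
    have h := congrArg (fun z => p * z) e1
    simp only [mul_add, ← mul_assoc, hid] at h
    have h2 : p * star (S p) + p * S p =
        (p * S p + p * star (S p) + p * S p) - p * S p := by abel
    rw [h2, ← h, sub_self]
  have e3 : S p = p * S p := by
    calc S p = p * S p + p * star (S p) + p * S p := e1
      _ = (p * star (S p) + p * S p) + p * S p := by abel
      _ = p * S p := by rw [e2, zero_add]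
  have e4 : p * star (S p) = -S p := by
    have h := eq_neg_of_add_eq_zero_left e2
    rw [h, ← e3]
  have e5 : star (S p) * p = -S p := by
    rw [← hc (star (S p))]
    exact e4
  -- now the identity at (p, p, x)
  have t1 : triple (S p) p x = (2 : ℂ)⁻¹ • (S p * x + x * S p) := by
    rw [triple, hsa, ← hc (S p), mul_assoc x p (S p), ← e3]
  have t2 : triple p (S p) x = (2 : ℂ)⁻¹ • (-(S p * x) + -(x * S p)) := by
    rw [triple, e4, mul_assoc x (star (S p)) p, e5, neg_mul, mul_neg]
  have hx := hS p p x
  rw [hppx, hppx, t1, t2, ← smul_add] at hx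
  have hz : (S p * x + x * S p) + (-(S p * x) + -(x * S p)) = 0 := by abel
  rw [hz, smul_zero, zero_add] at hx
  exact hx

variable {H : Type*} [NormedAddCommGroup H] [InnerProductSpace ℂ H] [CompleteSpace H]

/-- If `T` is a 2-local triple derivation on a von Neumann algebra `M` and
`p` is a central projection in `M`, then `T` maps `Mp` into `Mp`, and `T(px) = pT(x)` for
every `x ∈ M`. -/
theorem twoLocalTripleDerivation_central_projection (M : VonNeumannAlgebra H)
    (T : M → M) (hT : Is2LocalTripleDerivation T)
    (p : M) (hp_sa : IsSelfAdjoint p) (hp_idem : IsIdempotentElem p)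
    (hp_central : ∀ x : M, p * x = x * p) :
    (∀ x : M, ∃ y : M, T (x * p) = y * p) ∧ ∀ x : M, T (p * x) = p * T x := by
  have key : ∀ x : M, T (p * x) = p * T x := by
    intro x
    obtain ⟨S, hS, h1, h2⟩ := hT (p * x) x
    rw [h1, h2]
    exact tripleDerivation_central S hS p hp_sa hp_idem hp_central x
  refine ⟨fun x => ⟨T x, ?_⟩, key⟩
  rw [← hp_central x, ← hp_central (T x)]
  exact key x
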